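/- arXiv:2402.11396 — 3 statements merged into one kernel-verified Lean document; each statement's English description precedes it below -/
import Mathlib

section
/- Let π be a probability measure on a measurable space (Ω, 𝒜) and let f : Ω → ℝ≥0 be a probability density with respect to π (i.e. ∫ f dπ = 1). Then (1/2)·‖f − 1‖_{L¹(π)} ≤ φ(‖f − 1‖_{L²(π)}), where φ(x) = x/2 for x ≤ 1 and φ(x) = x²/(1+x²) for x ≥ 1. -/
open MeasureTheory

/-- The function φ from the tricky inequality. -/
noncomputable def phi (x : ℝ) : ℝ := if x ≤ 1 then x / 2 else x ^ 2 / (1 + x ^ 2)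

/-- Cauchy–Schwarz for integrals on a finite measure. -/
lemma cs_aux {Ω : Type*} [MeasurableSpace Ω] (μ : Measure Ω) [IsFiniteMeasure μ]
    {h : Ω → ℝ} (hnn : 0 ≤ᵐ[μ] h) (hint : Integrable h μ)
    (h2 : Integrable (fun ω => h ω ^ 2) μ) :
    (∫ ω, h ω ∂μ) ^ 2 ≤ (μ Set.univ).toReal * ∫ ω, h ω ^ 2 ∂μ := by
  have hconj : Real.HolderConjugate 2 2 := Real.HolderConjugate.two_two
  have hmem : MemLp h (ENNReal.ofReal 2) μ := by
    rw [show ENNReal.ofReal 2 = 2 by norm_num]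
    exact (memLp_two_iff_integrable_sq hint.1).mpr h2
  have hone : MemLp (fun _ : Ω => (1 : ℝ)) (ENNReal.ofReal 2) μ := memLp_const 1
  have key := integral_mul_le_Lp_mul_Lq_of_nonneg hconj hnn
    (Filter.Eventually.of_forall fun _ => zero_le_one) hmem hone
  simp only [mul_one] at key
  have h2cast : ∀ x : ℝ, x ^ (2 : ℝ) = x ^ 2 := fun x => by
    rw [show (2:ℝ) = ((2:ℕ):ℝ) by norm_num, Real.rpow_natCast]
  simp only [h2cast, one_pow, integral_const, smul_eq_mul, mul_one] at key
  have hInn : 0 ≤ ∫ ω, h ω ∂μ := integral_nonneg_of_ae hnn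
  have hs2 : 0 ≤ ∫ ω, h ω ^ 2 ∂μ :=
    integral_nonneg fun ω => sq_nonneg _
  have hc : 0 ≤ (μ Set.univ).toReal := ENNReal.toReal_nonneg
  have hr : ((∫ ω, h ω ^ 2 ∂μ) ^ ((1:ℝ)/2) * (μ Set.univ).toReal ^ ((1:ℝ)/2)) ^ 2
      = (μ Set.univ).toReal * ∫ ω, h ω ^ 2 ∂μ := by
    rw [mul_pow, ← Real.rpow_natCast ((∫ ω, h ω ^ 2 ∂μ) ^ ((1:ℝ)/2)) 2,
      ← Real.rpow_natCast ((μ Set.univ).toReal ^ ((1:ℝ)/2)) 2,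
      ← Real.rpow_mul hs2, ← Real.rpow_mul hc]
    norm_num [Real.rpow_one]
    ring
  calc (∫ ω, h ω ∂μ) ^ 2
      ≤ ((∫ ω, h ω ^ 2 ∂μ) ^ ((1:ℝ)/2) * (μ Set.univ).toReal ^ ((1:ℝ)/2)) ^ 2 := by
        apply pow_le_pow_left₀ hInn key
    _ = _ := hr

set_option maxHeartbeats 1000000 in
/-- If `f` is a probability density w.r.t. a probability measure `π`, then
`(1/2)·‖f − 1‖_{L¹(π)} ≤ φ(‖f − 1‖_{L²(π)})`. -/
theorem stmt_0 {Ω : Type*} [MeasurableSpace Ω] (π : Measure Ω) [IsProbabilityMeasure π]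
    (f : Ω → ℝ) (hf_meas : Measurable f) (hf_nonneg : ∀ ω, 0 ≤ f ω)
    (hf_int : Integrable f π) (hf_one : ∫ ω, f ω ∂π = 1)
    (hf_sq : Integrable (fun ω => (f ω - 1) ^ 2) π) :
    (1 / 2) * ∫ ω, |f ω - 1| ∂π ≤ phi (Real.sqrt (∫ ω, (f ω - 1) ^ 2 ∂π)) := by
  set g : Ω → ℝ := fun ω => f ω - 1 with hg_def
  have hg_int : Integrable g π := hf_int.sub (integrable_const 1)
  have hg_zero : ∫ ω, g ω ∂π = 0 := by
    simp [hg_def, integral_sub hf_int (integrable_const 1), hf_one]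
  set A : Set Ω := {ω | 1 ≤ f ω} with hA_def
  have hA : MeasurableSet A := measurableSet_le measurable_const hf_meas
  set u : ℝ := ∫ ω in A, g ω ∂π with hu_def
  set s2 : ℝ := ∫ ω, g ω ^ 2 ∂π with hs2_def
  have hs2_nonneg : 0 ≤ s2 := integral_nonneg fun ω => sq_nonneg _
  set s : ℝ := Real.sqrt s2 with hs_def
  have hs_nonneg : 0 ≤ s := Real.sqrt_nonneg _
  have hs_sq : s ^ 2 = s2 := Real.sq_sqrt hs2_nonneg
  have hsplit : (∫ ω in A, g ω ∂π) + ∫ ω in Aᶜ, g ω ∂π = 0 := by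
    rw [integral_add_compl hA hg_int, hg_zero]
  have hcompl : ∫ ω in Aᶜ, -g ω ∂π = u := by
    rw [integral_neg]; linarith
  -- pointwise facts
  have hg_nonneg_A : ∀ ω ∈ A, 0 ≤ g ω := by
    intro ω hω; simp only [hA_def, Set.mem_setOf_eq] at hω
    simp only [hg_def]; linarith
  have hg_nonpos_Ac : ∀ ω ∈ Aᶜ, g ω ≤ 0 := by
    intro ω hω; simp only [hA_def, Set.mem_compl_iff, Set.mem_setOf_eq, not_le] at hω
    simp only [hg_def]; linarith
  -- |g| integral equals 2u
  have habs : ∫ ω, |g ω| ∂π = 2 * u := by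
    rw [← integral_add_compl hA hg_int.abs]
    have h1 : ∫ ω in A, |g ω| ∂π = u := by
      apply setIntegral_congr_fun hA
      intro ω hω; exact abs_of_nonneg (hg_nonneg_A ω hω)
    have h2 : ∫ ω in Aᶜ, |g ω| ∂π = u := by
      rw [← hcompl]
      apply setIntegral_congr_fun hA.compl
      intro ω hω; exact abs_of_nonpos (hg_nonpos_Ac ω hω)
    rw [h1, h2]; ring
  have hu_nonneg : 0 ≤ u := by
    have : 0 ≤ ∫ ω, |g ω| ∂π := integral_nonneg fun ω => abs_nonneg _
    linarith [habs ▸ this]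
  -- global Cauchy–Schwarz : (2u)^2 ≤ s2
  have hCS : (2 * u) ^ 2 ≤ s2 := by
    have := cs_aux π (h := fun ω => |g ω|)
      (Filter.Eventually.of_forall fun ω => abs_nonneg _) hg_int.abs
      (by simpa [sq_abs] using hf_sq)
    simpa [measure_univ, sq_abs, habs] using this
  have hIle : 2 * u ≤ s := by
    nlinarith [hs_sq, hs_nonneg, hu_nonneg]
  -- goal restated
  have hgoal_eq : (1 / 2) * ∫ ω, |f ω - 1| ∂π = u := by
    rw [show (∫ ω, |f ω - 1| ∂π) = ∫ ω, |g ω| ∂π from rfl, habs]; ring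
  rw [hgoal_eq]
  by_cases hs1 : s ≤ 1
  · rw [phi, if_pos hs1]; linarith
  · rw [phi, if_neg hs1]
    push_neg at hs1
    rw [hs_sq]
    have hs2_gt : 1 < s2 := by nlinarith
    by_cases hu_half : u ≤ 1/2
    · have : (1:ℝ)/2 ≤ s2 / (1 + s2) := by
        rw [le_div_iff₀ (by linarith : (0:ℝ) < 1 + s2)]; nlinarith
      linarith
    · push_neg at hu_half
      set p : ℝ := (π A).toReal with hp_def
      set q : ℝ := (π Aᶜ).toReal with hq_def
      have hp_nonneg : 0 ≤ p := ENNReal.toReal_nonneg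
      have hq_nonneg : 0 ≤ q := ENNReal.toReal_nonneg
      have hpq : p + q = 1 := by
        rw [hp_def, hq_def, ← ENNReal.toReal_add (measure_ne_top _ _) (measure_ne_top _ _),
          measure_add_measure_compl hA, measure_univ, ENNReal.toReal_one]
      -- u ≤ q
      have hu_le_q : u ≤ q := by
        have : ∫ ω in Aᶜ, -g ω ∂π ≤ ∫ ω in Aᶜ, (1:ℝ) ∂π := by
          apply setIntegral_mono_on (hg_int.neg.restrict) (integrable_const 1) hA.compl
          intro ω hω; simp only [Pi.neg_apply, hg_def]; linarith [hf_nonneg ω]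
        rw [hcompl] at this
        simpa [hq_def, Measure.restrict_apply_univ, measureReal_def] using this
      -- p > 0
      have hp_pos : 0 < p := by
        rcases eq_or_lt_of_le hp_nonneg with h0 | h0
        · exfalso
          have hA0 : π A = 0 := by
            rw [hp_def] at h0
            exact ((ENNReal.toReal_eq_zero_iff _).mp h0.symm).resolve_right (measure_ne_top _ _)
          have : u = 0 := by
            rw [hu_def, Measure.restrict_eq_zero.mpr hA0, integral_zero_measure]
          linarith
        · exact h0
      have hq_pos : 0 < q := by linarith
      -- CS on A
      have hCSA : u ^ 2 ≤ p * ∫ ω in A, g ω ^ 2 ∂π := by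
        have := cs_aux (π.restrict A) (h := g)
          ((ae_restrict_iff' hA).mpr (Filter.Eventually.of_forall hg_nonneg_A))
          hg_int.restrict (hf_sq.restrict)
        simpa [Measure.restrict_apply_univ, hp_def] using this
      -- CS on Aᶜ
      have hCSAc : u ^ 2 ≤ q * ∫ ω in Aᶜ, g ω ^ 2 ∂π := by
        have := cs_aux (π.restrict Aᶜ) (h := fun ω => -g ω)
          ((ae_restrict_iff' hA.compl).mpr (Filter.Eventually.of_forall
            (fun ω hω => neg_nonneg.mpr (hg_nonpos_Ac ω hω))))
          hg_int.neg.restrict (by simpa using hf_sq.restrict)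
        rw [hcompl] at this
        simpa [Measure.restrict_apply_univ, hq_def, neg_pow] using this
      have hs2_split : s2 = (∫ ω in A, g ω ^ 2 ∂π) + ∫ ω in Aᶜ, g ω ^ 2 ∂π := by
        rw [hs2_def, ← integral_add_compl hA hf_sq]
      -- arithmetic finish
      have hIA_nonneg : 0 ≤ ∫ ω in A, g ω ^ 2 ∂π := integral_nonneg fun ω => sq_nonneg _
      have hIC_nonneg : 0 ≤ ∫ ω in Aᶜ, g ω ^ 2 ∂π := integral_nonneg fun ω => sq_nonneg _
      -- p*q*s2 ≥ u^2 and p*q ≤ u*(1-u)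
      have e1 := mul_le_mul_of_nonneg_left hCSA hq_nonneg
      have e2 := mul_le_mul_of_nonneg_left hCSAc hp_nonneg
      have h1 : u ^ 2 ≤ p * q * s2 := by
        rw [hs2_split]
        have h := add_le_add e1 e2
        nlinarith [h, hpq, sq_nonneg u, hu_nonneg]
      have hup : p < u := by linarith
      have h2 : p * q ≤ u * (1 - u) := by
        nlinarith [mul_nonneg (sub_pos.mpr hup).le (sub_nonneg.mpr hu_le_q)]
      have h3 : u ^ 2 ≤ u * (1 - u) * s2 :=
        h1.trans (mul_le_mul_of_nonneg_right h2 hs2_nonneg)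
      have h4 : u ≤ (1 - u) * s2 := by nlinarith [h3, hu_half]
      rw [le_div_iff₀ (by linarith : (0:ℝ) < 1 + s2)]
      nlinarith
end

section
/- As s → 0⁺, the total variation distance between N(0,1+s) and N(0,1) satisfies ‖N(0,1+s) − N(0,1)‖_TV = s/√(2eπ) · (1 + o(1)). -/
open MeasureTheory ProbabilityTheory Filter

/-- Total variation distance between two measures: sup over measurable sets `E`
of `|μ(E) − ν(E)|`. -/
noncomputable def tvDist {α : Type*} [MeasurableSpace α] (μ ν : Measure α) : ℝ :=
  ⨆ E : {E : Set α // MeasurableSet E}, |(μ E.1).toReal - (ν E.1).toReal|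

section Stmt3AuxSection

open Real
open scoped NNReal ENNReal

namespace Stmt3Aux

noncomputable def g0 : ℝ → ℝ := gaussianPDFReal 0 1
noncomputable def G (t : ℝ) : ℝ := ∫ x in (-t)..t, g0 x
noncomputable def cc (s : ℝ) : ℝ := Real.sqrt ((1 + s) * Real.log (1 + s) / s)
noncomputable def dd (s : ℝ) : ℝ := cc s / Real.sqrt (1 + s)

lemma g0_cont : Continuous g0 := by
  unfold g0 gaussianPDFReal
  fun_prop

lemma g0_int : Integrable g0 := integrable_gaussianPDFReal 0 1

lemma exp_form {u t : ℝ} (hu : 0 < u) : (Real.sqrt u)⁻¹ * Real.exp t = Real.exp (t - Real.log u / 2) := by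
  have h1 : (Real.sqrt u)⁻¹ = Real.exp (-(Real.log u / 2)) := by
    rw [← Real.log_sqrt hu.le, Real.exp_neg, Real.exp_log (Real.sqrt_pos.mpr hu)]
  rw [h1, ← Real.exp_add]
  ring_nf

lemma sign_iff {s : ℝ} (hs : 0 < s) (x : ℝ) :
    gaussianPDFReal 0 1 x ≤ gaussianPDFReal 0 (Real.toNNReal (1 + s)) x ↔ cc s ≤ |x| := by
  have h1 : (0:ℝ) < 1 + s := by linarith
  have hvr : ((Real.toNNReal (1 + s)) : ℝ) = 1 + s := Real.coe_toNNReal _ h1.le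
  have h2pi : (0:ℝ) < 2 * π := by positivity
  rw [gaussianPDFReal, gaussianPDFReal, hvr]
  simp only [NNReal.coe_one, mul_one, sub_zero]
  rw [exp_form h2pi, exp_form (by positivity : (0:ℝ) < 2 * π * (1 + s)), Real.exp_le_exp]
  rw [Real.log_mul (by positivity) h1.ne']
  have hcc : cc s ≤ |x| ↔ (1 + s) * Real.log (1 + s) / s ≤ x ^ 2 := by
    rw [cc, ← Real.sqrt_sq_eq_abs]
    exact Real.sqrt_le_sqrt_iff (by positivity)
  rw [hcc, div_le_iff₀ hs]
  have hc : 2 * (1 + s) * (-x ^ 2 / (2 * (1 + s))) = -x ^ 2 := by field_simp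
  constructor
  · intro h
    have h2 := mul_le_mul_of_nonneg_left h (by positivity : (0:ℝ) ≤ 2 * (1 + s))
    nlinarith [h2, hc]
  · intro h
    have hgoal : 2 * (1 + s) * (-x ^ 2 / 2 - Real.log (2 * π) / 2) ≤
        2 * (1 + s) * (-x ^ 2 / (2 * (1 + s)) - (Real.log (2 * π) + Real.log (1 + s)) / 2) := by
      nlinarith [hc]
    exact le_of_mul_le_mul_left hgoal (by positivity)

lemma cc_pos {s : ℝ} (hs : 0 < s) : 0 < cc s := by
  have h1 : (0:ℝ) < 1 + s := by linarith
  have hL : 0 < Real.log (1 + s) := Real.log_pos (by linarith)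
  rw [cc]
  apply Real.sqrt_pos.mpr
  positivity

lemma tv_eq {s : ℝ} (hs : 0 < s) :
    tvDist (gaussianReal 0 (Real.toNNReal (1 + s))) (gaussianReal 0 1) = G (cc s) - G (dd s) := by
  have h1 : (0:ℝ) < 1 + s := by linarith
  set v : ℝ≥0 := Real.toNNReal (1 + s) with hv_def
  have hv : v ≠ 0 := by
    simp only [hv_def, ne_eq, Real.toNNReal_eq_zero, not_le]
    linarith
  set f := gaussianPDFReal 0 v with hf_def
  set g := gaussianPDFReal 0 1 with hg_def
  have hfint : Integrable f := integrable_gaussianPDFReal 0 v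
  have hgint : Integrable g := integrable_gaussianPDFReal 0 1
  have hfn : ∀ x, 0 ≤ f x := fun x => gaussianPDFReal_nonneg 0 v x
  have hgn : ∀ x, 0 ≤ g x := fun x => gaussianPDFReal_nonneg 0 1 x
  set c := cc s with hc_def
  have hcpos : 0 < c := cc_pos hs
  set A : Set ℝ := {x | c ≤ |x|} with hA_def
  have hA : MeasurableSet A := measurableSet_le measurable_const measurable_id.abs
  have hsignA : ∀ x ∈ A, g x ≤ f x := fun x hx => (sign_iff hs x).mpr hx
  have hsignAc : ∀ x ∉ A, f x ≤ g x := by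
    intro x hx
    have hngf : ¬ (g x ≤ f x) := fun hcon => hx ((sign_iff hs x).mp hcon)
    exact (not_le.mp hngf).le
  have hmu : ∀ E : Set ℝ, ((gaussianReal 0 v) E).toReal = ∫ x in E, f x := by
    intro E
    rw [gaussianReal_apply_eq_integral 0 hv E,
      ENNReal.toReal_ofReal (integral_nonneg fun x => hfn x)]
  have hnu : ∀ E : Set ℝ, ((gaussianReal 0 1) E).toReal = ∫ x in E, g x := by
    intro E
    rw [gaussianReal_apply_eq_integral 0 one_ne_zero E,
      ENNReal.toReal_ofReal (integral_nonneg fun x => hgn x)]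
  have hf1 : ∫ x, f x = 1 := integral_gaussianPDFReal_eq_one 0 hv
  have hg1 : ∫ x, g x = 1 := integral_gaussianPDFReal_eq_one 0 one_ne_zero
  set T : ℝ := ∫ x in A, (f x - g x) with hT_def
  have hsub_int : Integrable (fun x => f x - g x) := hfint.sub hgint
  have hppos : Integrable (fun x => max (f x - g x) 0) := hsub_int.pos_part
  have hmpos : Integrable (fun x => max (g x - f x) 0) := (hgint.sub hfint).pos_part
  have hcompl : ∫ x in Aᶜ, (g x - f x) = T := by
    have h4 : (∫ x in A, (g x - f x)) + ∫ x in Aᶜ, (g x - f x) = ∫ x, (g x - f x) :=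
      integral_add_compl hA (hgint.sub hfint)
    have h5 : ∫ x, (g x - f x) = 0 := by
      rw [integral_sub hgint hfint, hg1, hf1]; ring
    have h6 : ∫ x in A, (g x - f x) = -T := by
      rw [hT_def, ← integral_neg]
      congr 1 with x
      ring
    linarith
  have hppos_eq : ∫ x, max (f x - g x) 0 = T := by
    rw [← integral_add_compl hA hppos]
    have e1 : ∫ x in A, max (f x - g x) 0 = ∫ x in A, (f x - g x) :=
      setIntegral_congr_fun hA (fun x hx => max_eq_left (sub_nonneg.mpr (hsignA x hx)))
    have e2 : ∫ x in Aᶜ, max (f x - g x) 0 = 0 := by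
      rw [setIntegral_congr_fun hA.compl
        (fun x hx => max_eq_right (sub_nonpos.mpr (hsignAc x hx)) : Set.EqOn _ (fun _ => (0:ℝ)) Aᶜ)]
      simp
    rw [e1, e2, add_zero]
  have hmpos_eq : ∫ x, max (g x - f x) 0 = T := by
    rw [← integral_add_compl hA hmpos]
    have e1 : ∫ x in A, max (g x - f x) 0 = 0 := by
      rw [setIntegral_congr_fun hA
        (fun x hx => max_eq_right (sub_nonpos.mpr (hsignA x hx)) : Set.EqOn _ (fun _ => (0:ℝ)) A)]
      simp
    have e2 : ∫ x in Aᶜ, max (g x - f x) 0 = ∫ x in Aᶜ, (g x - f x) :=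
      setIntegral_congr_fun hA.compl (fun x hx => max_eq_left (sub_nonneg.mpr (hsignAc x hx)))
    rw [e1, e2, zero_add, hcompl]
  have hbound : ∀ E : {E : Set ℝ // MeasurableSet E},
      |((gaussianReal 0 v) E.1).toReal - ((gaussianReal 0 1) E.1).toReal| ≤ T := by
    rintro ⟨E, hE⟩
    rw [hmu, hnu, ← integral_sub hfint.integrableOn hgint.integrableOn, abs_le]
    constructor
    · have hle : ∫ x in E, (g x - f x) ≤ T := by
        calc ∫ x in E, (g x - f x) ≤ ∫ x in E, max (g x - f x) 0 :=
              setIntegral_mono (hgint.sub hfint).integrableOn hmpos.integrableOn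
                (fun x => le_max_left _ _)
          _ ≤ ∫ x, max (g x - f x) 0 :=
              setIntegral_le_integral hmpos (ae_of_all _ fun x => le_max_right _ _)
          _ = T := hmpos_eq
      have heq : ∫ x in E, (f x - g x) = - ∫ x in E, (g x - f x) := by
        rw [← integral_neg]
        congr 1 with x
        ring
      linarith
    · calc ∫ x in E, (f x - g x) ≤ ∫ x in E, max (f x - g x) 0 :=
            setIntegral_mono hsub_int.integrableOn hppos.integrableOn (fun x => le_max_left _ _)
        _ ≤ ∫ x, max (f x - g x) 0 :=
            setIntegral_le_integral hppos (ae_of_all _ fun x => le_max_right _ _)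
        _ = T := hppos_eq
  have hTA : ((gaussianReal 0 v) A).toReal - ((gaussianReal 0 1) A).toReal = T := by
    rw [hmu, hnu, ← integral_sub hfint.integrableOn hgint.integrableOn]
  have hTnonneg : 0 ≤ T :=
    setIntegral_nonneg hA (fun x hx => sub_nonneg.mpr (hsignA x hx))
  have htv : tvDist (gaussianReal 0 v) (gaussianReal 0 1) = T := by
    rw [tvDist]
    apply le_antisymm
    · exact ciSup_le hbound
    · have hbdd : BddAbove (Set.range fun E : {E : Set ℝ // MeasurableSet E} =>
          |((gaussianReal 0 v) E.1).toReal - ((gaussianReal 0 1) E.1).toReal|) := by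
        refine ⟨T, ?_⟩
        rintro y ⟨E, rfl⟩
        exact hbound E
      calc T = |((gaussianReal 0 v) A).toReal - ((gaussianReal 0 1) A).toReal| := by
            rw [hTA, abs_of_nonneg hTnonneg]
        _ ≤ _ := le_ciSup hbdd (⟨A, hA⟩ : {E : Set ℝ // MeasurableSet E})
  have hAc : Aᶜ = Set.Ioo (-c) c := by
    ext x
    simp only [hA_def, Set.mem_compl_iff, Set.mem_setOf_eq, not_le, Set.mem_Ioo]
    rw [abs_lt]
  have hIg : ∫ x in Set.Ioo (-c) c, g x = G c := by
    rw [G, intervalIntegral.integral_of_le (by linarith : -c ≤ c), integral_Ioc_eq_integral_Ioo,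
      show g0 = g from rfl]
  have hs1 : Real.sqrt (1 + s) ≠ 0 := (Real.sqrt_pos.mpr h1).ne'
  have hfe : ∀ x, f x = (Real.sqrt (1 + s))⁻¹ * g (x / Real.sqrt (1 + s)) := by
    intro x
    have hvr : ((v:ℝ)) = 1 + s := Real.coe_toNNReal _ h1.le
    rw [hf_def, hg_def, gaussianPDFReal, gaussianPDFReal, hvr]
    simp only [NNReal.coe_one, mul_one, sub_zero]
    rw [div_pow, Real.sq_sqrt h1.le,
      show 2 * π * (1 + s) = (2 * π) * (1 + s) by ring,
      Real.sqrt_mul (by positivity : (0:ℝ) ≤ 2 * π), mul_inv]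
    have harg : -x ^ 2 / (2 * (1 + s)) = -(x ^ 2 / (1 + s)) / 2 := by
      have h2 : (1 + s) ≠ 0 := h1.ne'
      field_simp
    rw [harg]
    ring
  have hIf : ∫ x in Set.Ioo (-c) c, f x = G (dd s) := by
    calc ∫ x in Set.Ioo (-c) c, f x = ∫ x in Set.Ioc (-c) c, f x :=
          (integral_Ioc_eq_integral_Ioo).symm
      _ = ∫ x in (-c)..c, f x := (intervalIntegral.integral_of_le (by linarith : -c ≤ c)).symm
      _ = ∫ x in (-c)..c, (Real.sqrt (1 + s))⁻¹ * g (x / Real.sqrt (1 + s)) := by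
          simp_rw [hfe]
      _ = (Real.sqrt (1 + s))⁻¹ * ∫ x in (-c)..c, g (x / Real.sqrt (1 + s)) :=
          intervalIntegral.integral_const_mul _ _
      _ = (Real.sqrt (1 + s))⁻¹ *
          (Real.sqrt (1 + s) • ∫ x in (-c) / Real.sqrt (1 + s)..c / Real.sqrt (1 + s), g x) := by
          rw [intervalIntegral.integral_comp_div _ hs1]
      _ = ∫ x in (-(dd s))..(dd s), g x := by
          rw [smul_eq_mul, inv_mul_cancel_left₀ hs1, dd, ← hc_def, neg_div]
      _ = G (dd s) := rfl
  rw [htv, ← hcompl, hAc, integral_sub hgint.integrableOn hfint.integrableOn, hIg, hIf]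

lemma G_deriv : HasStrictDerivAt G (2 * g0 1) 1 := by
  have hcont : Continuous g0 := g0_cont
  have hF1 : HasStrictDerivAt (fun t : ℝ => ∫ x in (0:ℝ)..t, g0 x) (g0 1) 1 :=
    intervalIntegral.integral_hasStrictDerivAt_right (hcont.intervalIntegrable _ _)
      (hcont.stronglyMeasurableAtFilter _ _) hcont.continuousAt
  have hF2i : HasStrictDerivAt (fun u : ℝ => ∫ x in u..(0:ℝ), g0 x) (-g0 (-1)) (-1) :=
    intervalIntegral.integral_hasStrictDerivAt_left (hcont.intervalIntegrable _ _)
      (hcont.stronglyMeasurableAtFilter _ _) hcont.continuousAt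
  have hneg : HasStrictDerivAt (fun t : ℝ => -t) (-1) 1 := by
    exact (hasStrictDerivAt_id (1:ℝ)).neg
  have hF2 : HasStrictDerivAt (fun t : ℝ => ∫ x in (-t)..(0:ℝ), g0 x) (-g0 (-1) * -1) 1 := by
    have := hF2i.comp 1 hneg
    exact this
  have hsum := hF2.add hF1
  have hfun : (fun t : ℝ => (∫ x in (-t)..(0:ℝ), g0 x) + ∫ x in (0:ℝ)..t, g0 x) = G := by
    funext t
    rw [G, intervalIntegral.integral_add_adjacent_intervals (hcont.intervalIntegrable _ _)
      (hcont.intervalIntegrable _ _)]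
  have hval : -g0 (-1) * -1 + g0 1 = 2 * g0 1 := by
    have hgg : g0 (-1) = g0 1 := by
      rw [g0, gaussianPDFReal, gaussianPDFReal]
      norm_num
    rw [hgg]; ring
  rw [← hfun, ← hval]
  exact hsum

lemma h_one_add : Tendsto (fun s : ℝ => 1 + s) (nhdsWithin 0 (Set.Ioi 0)) (nhds 1) := by
  have h : Tendsto (fun s : ℝ => 1 + s) (nhds 0) (nhds 1) := by
    simpa using (continuous_add_left (1:ℝ)).tendsto (0:ℝ)
  exact h.mono_left nhdsWithin_le_nhds

lemma h_sqrt1s : Tendsto (fun s : ℝ => Real.sqrt (1 + s)) (nhdsWithin 0 (Set.Ioi 0)) (nhds 1) := by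
  have := (Real.continuous_sqrt.tendsto (1:ℝ)).comp h_one_add
  simpa [Real.sqrt_one, Function.comp_def] using this

lemma h_log : Tendsto (fun s : ℝ => Real.log (1 + s) / s)
    (nhdsWithin 0 (Set.Ioi 0)) (nhds 1) := by
  have hd : HasDerivAt (fun x : ℝ => Real.log (1 + x)) 1 0 := by
    have h := (Real.hasDerivAt_log (by norm_num : (1:ℝ) + 0 ≠ 0)).comp 0
      ((hasDerivAt_id (0:ℝ)).const_add 1)
    simpa [Function.comp_def] using h
  have h1 := hasDerivAt_iff_tendsto_slope.mp hd
  have h2 : Tendsto (slope (fun x : ℝ => Real.log (1 + x)) 0)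
      (nhdsWithin 0 (Set.Ioi 0)) (nhds 1) :=
    h1.mono_left (nhdsWithin_mono 0 (fun x hx => ne_of_gt hx))
  refine h2.congr' ?_
  filter_upwards [self_mem_nhdsWithin] with s _
  simp [slope_def_field]

lemma h_sqrt : Tendsto (fun s : ℝ => (Real.sqrt (1 + s) - 1) / s)
    (nhdsWithin 0 (Set.Ioi 0)) (nhds (1/2)) := by
  have hd : HasDerivAt (fun x : ℝ => Real.sqrt (1 + x)) (1/2) 0 := by
    have h := (Real.hasDerivAt_sqrt (by norm_num : (1:ℝ) + 0 ≠ 0)).comp 0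
      ((hasDerivAt_id (0:ℝ)).const_add 1)
    simpa [Real.sqrt_one, Function.comp_def] using h
  have h1 := hasDerivAt_iff_tendsto_slope.mp hd
  have h2 : Tendsto (slope (fun x : ℝ => Real.sqrt (1 + x)) 0)
      (nhdsWithin 0 (Set.Ioi 0)) (nhds (1/2)) :=
    h1.mono_left (nhdsWithin_mono 0 (fun x hx => ne_of_gt hx))
  refine h2.congr' ?_
  filter_upwards [self_mem_nhdsWithin] with s _
  simp [slope_def_field, Real.sqrt_one]

lemma h_cc : Tendsto cc (nhdsWithin 0 (Set.Ioi 0)) (nhds 1) := by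
  have h : Tendsto (fun s : ℝ => (1 + s) * (Real.log (1 + s) / s))
      (nhdsWithin 0 (Set.Ioi 0)) (nhds 1) := by
    simpa using h_one_add.mul h_log
  have h2 := (Real.continuous_sqrt.tendsto (1:ℝ)).comp h
  rw [Real.sqrt_one] at h2
  refine h2.congr (fun s => ?_)
  rw [cc, Function.comp_apply, mul_div_assoc]

lemma h_dd : Tendsto dd (nhdsWithin 0 (Set.Ioi 0)) (nhds 1) := by
  have := h_cc.div h_sqrt1s one_ne_zero
  rw [div_one] at this; exact this

lemma h_cd : Tendsto (fun s : ℝ => (cc s - dd s) / s)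
    (nhdsWithin 0 (Set.Ioi 0)) (nhds (1/2)) := by
  have key : Tendsto (fun s : ℝ => cc s * ((Real.sqrt (1 + s) - 1) / s) / Real.sqrt (1 + s))
      (nhdsWithin 0 (Set.Ioi 0)) (nhds (1 * (1/2) / 1)) :=
    (h_cc.mul h_sqrt).div h_sqrt1s one_ne_zero
  rw [show (1:ℝ) * (1/2) / 1 = 1/2 by norm_num] at key
  refine key.congr' ?_
  filter_upwards [self_mem_nhdsWithin] with s hs
  have h1 : (0:ℝ) < 1 + s := by
    have : (0:ℝ) < s := hs
    linarith
  have hsq : Real.sqrt (1 + s) ≠ 0 := (Real.sqrt_pos.mpr h1).ne'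
  have hsne : s ≠ 0 := (show (0:ℝ) < s from hs).ne'
  rw [dd]
  field_simp

lemma hK_val : g0 1 * Real.sqrt (2 * Real.exp 1 * π) = 1 := by
  have h2pi : (0:ℝ) < 2 * π := by positivity
  have h1 : Real.sqrt (2 * π) ≠ 0 := (Real.sqrt_pos.mpr h2pi).ne'
  have hKsplit : Real.sqrt (2 * Real.exp 1 * π)
      = Real.sqrt (2 * π) * Real.sqrt (Real.exp 1) := by
    rw [show 2 * Real.exp 1 * π = (2 * π) * Real.exp 1 by ring, Real.sqrt_mul h2pi.le]
  have hsqrtexp : Real.sqrt (Real.exp 1) = Real.exp (1/2) := by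
    rw [show Real.exp 1 = Real.exp (1/2) ^ 2 by rw [pow_two, ← Real.exp_add]; norm_num]
    exact Real.sqrt_sq (Real.exp_pos _).le
  have hg01 : g0 1 = (Real.sqrt (2 * π))⁻¹ * Real.exp (-(1/2)) := by
    rw [g0, gaussianPDFReal]
    norm_num
  have hee : Real.exp (-(1/2)) * Real.exp (1/2) = 1 := by
    rw [← Real.exp_add]; norm_num
  calc g0 1 * Real.sqrt (2 * Real.exp 1 * π)
      = ((Real.sqrt (2 * π))⁻¹ * Real.sqrt (2 * π)) * (Real.exp (-(1/2)) * Real.exp (1/2)) := by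
        rw [hg01, hKsplit, hsqrtexp]; ring
    _ = 1 := by rw [inv_mul_cancel₀ h1, hee, mul_one]

theorem main :
    Tendsto (fun s : ℝ =>
        tvDist (gaussianReal 0 (Real.toNNReal (1 + s))) (gaussianReal 0 1)
          / (s / Real.sqrt (2 * Real.exp 1 * Real.pi)))
      (nhdsWithin 0 (Set.Ioi 0)) (nhds 1) := by
  set l := nhdsWithin (0:ℝ) (Set.Ioi 0) with hl
  set D : ℝ := 2 * g0 1 with hD_def
  set K : ℝ := Real.sqrt (2 * Real.exp 1 * π) with hK_def
  have hD : HasStrictDerivAt G D 1 := G_deriv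
  have hpair : Tendsto (fun s : ℝ => (cc s, dd s)) l (nhds (1, 1)) :=
    h_cc.prodMk_nhds h_dd
  have ho : (fun p : ℝ × ℝ => G p.1 - G p.2 - (p.1 - p.2) * D)
      =o[nhds ((1:ℝ), (1:ℝ))] (fun p => p.1 - p.2) := by
    have h := HasStrictFDerivAt.isLittleO hD
    simpa [smul_eq_mul] using h
  have ho2 : (fun s : ℝ => G (cc s) - G (dd s) - (cc s - dd s) * D)
      =o[l] (fun s => cc s - dd s) := by
    have := ho.comp_tendsto hpair
    simpa [Function.comp_def] using this
  have hbig : (fun s : ℝ => cc s - dd s) =O[l] (fun s => s) := by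
    apply Asymptotics.isBigO_of_div_tendsto_nhds
    · filter_upwards [self_mem_nhdsWithin] with s hs h0
      exact absurd h0 (ne_of_gt hs)
    · exact h_cd
  have ho3 : (fun s : ℝ => G (cc s) - G (dd s) - (cc s - dd s) * D) =o[l] (fun s => s) :=
    ho2.trans_isBigO hbig
  have hz : Tendsto (fun s : ℝ => (G (cc s) - G (dd s) - (cc s - dd s) * D) / s) l (nhds 0) :=
    ho3.tendsto_div_nhds_zero
  have hmain : Tendsto (fun s : ℝ => (G (cc s) - G (dd s)) / s) l (nhds (0 + 1/2 * D)) := by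
    have h := hz.add (h_cd.mul_const D)
    refine h.congr (fun s => ?_)
    ring
  have hfinal : Tendsto (fun s : ℝ => (G (cc s) - G (dd s)) / s * K)
      l (nhds ((0 + 1/2 * D) * K)) := hmain.mul_const K
  have hval : (0 + 1/2 * D) * K = 1 := by
    rw [hD_def, hK_def]
    have := hK_val
    nlinarith [hK_val]
  rw [hval] at hfinal
  refine hfinal.congr' ?_
  filter_upwards [self_mem_nhdsWithin] with s hs
  rw [tv_eq hs, div_div_eq_mul_div]
  ring

end Stmt3Aux

end Stmt3AuxSection

/-- As `s → 0⁺`, `‖N(0,1+s) − N(0,1)‖_TV = s/√(2eπ)·(1+o(1))`. -/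
theorem stmt_3 :
    Tendsto (fun s : ℝ =>
        tvDist (gaussianReal 0 (Real.toNNReal (1 + s))) (gaussianReal 0 1)
          / (s / Real.sqrt (2 * Real.exp 1 * Real.pi)))
      (nhdsWithin 0 (Set.Ioi 0)) (nhds 1) :=
  Stmt3Aux.main
end

section
/- Let q(1),…,q(n) be real numbers and let σ_1,…,σ_n be i.i.d. uniform on {−1,1} under π. Set h(σ) := Π_{i=1}^n (1 + σ_i q(i)). Then ∫ (h − Σ_i σ_i q(i))² dπ − 1 = Π_{i=1}^n (1 + q(i)²) − Σ_i q(i)² − 1 ≤ e^{⟨q,q⟩} − ⟨q,q⟩ − 1, where ⟨q,q⟩ = Σ_i q(i)². -/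
open MeasureTheory

instance : Nonempty ({-1, 1} : Set ℝ) := ⟨⟨1, by simp⟩⟩

namespace Stmt11Aux

noncomputable abbrev S : Type := ({-1, 1} : Set ℝ)

lemma neg_mem : (-1 : ℝ) ∈ ({-1, 1} : Set ℝ) := by simp
lemma one_mem : (1 : ℝ) ∈ ({-1, 1} : Set ℝ) := by simp

lemma univ_S : (Finset.univ : Finset S) = {⟨-1, neg_mem⟩, ⟨1, one_mem⟩} := by
  ext x
  simp only [Finset.mem_univ, true_iff, Finset.mem_insert, Finset.mem_singleton]
  rcases x.2 with h | h
  · exact Or.inl (Subtype.ext h)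
  · exact Or.inr (Subtype.ext h)

lemma sum_S (g : S → ℝ) : ∑ x : S, g x = g ⟨-1, neg_mem⟩ + g ⟨1, one_mem⟩ := by
  rw [univ_S, Finset.sum_pair]
  intro h
  have := congrArg Subtype.val h
  norm_num at this

lemma card_S : Fintype.card S = 2 := by
  rw [Fintype.card, univ_S, Finset.card_pair]
  intro h
  have := congrArg Subtype.val h
  norm_num at this

variable (n : ℕ) (q : Fin n → ℝ)

lemma prod_sum (f : Fin n → S → ℝ) :
    ∑ σ : Fin n → S, ∏ i, f i (σ i) = ∏ i, ∑ x : S, f i x := by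
  have := Finset.prod_univ_sum (fun _ : Fin n => (Finset.univ : Finset S)) f
  rw [Fintype.piFinset_univ] at this
  exact this.symm

lemma L1 : ∑ σ : Fin n → S, ∏ i, (1 + (σ i : ℝ) * q i) ^ 2
    = 2 ^ n * ∏ i, (1 + q i ^ 2) := by
  rw [prod_sum n (fun i x => (1 + (x : ℝ) * q i) ^ 2)]
  have : ∀ i : Fin n, (∑ x : S, (1 + (x : ℝ) * q i) ^ 2) = 2 * (1 + q i ^ 2) := by
    intro i
    rw [sum_S]
    push_cast
    ring
  rw [Finset.prod_congr rfl fun i _ => this i, Finset.prod_mul_distrib,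
    Finset.prod_const, Finset.card_univ, Fintype.card_fin]

lemma L2 (j : Fin n) : ∑ σ : Fin n → S, (∏ i, (1 + (σ i : ℝ) * q i)) * ((σ j : ℝ) * q j)
    = 2 ^ n * q j ^ 2 := by
  have step : ∀ σ : Fin n → S,
      (∏ i, (1 + (σ i : ℝ) * q i)) * ((σ j : ℝ) * q j)
      = ∏ i, ((1 + (σ i : ℝ) * q i) * (if j = i then (σ i : ℝ) * q i else 1)) := by
    intro σ
    rw [Finset.prod_mul_distrib, Finset.prod_ite_eq]
    simp
  simp only [step]
  rw [prod_sum n (fun i x => (1 + (x : ℝ) * q i) * (if j = i then (x : ℝ) * q i else 1))]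
  have : ∀ i : Fin n,
      (∑ x : S, ((1 + (x : ℝ) * q i) * (if j = i then (x : ℝ) * q i else 1)))
      = 2 * (if j = i then q i ^ 2 else 1) := by
    intro i
    by_cases h : j = i <;> rw [sum_S] <;> simp [h] <;> ring
  rw [Finset.prod_congr rfl fun i _ => this i, Finset.prod_mul_distrib,
    Finset.prod_const, Finset.card_univ, Fintype.card_fin, Finset.prod_ite_eq]
  simp

lemma L3 (j k : Fin n) : ∑ σ : Fin n → S, ((σ j : ℝ) * q j) * ((σ k : ℝ) * q k)
    = if j = k then 2 ^ n * q j ^ 2 else 0 := by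
  have step : ∀ σ : Fin n → S,
      ((σ j : ℝ) * q j) * ((σ k : ℝ) * q k)
      = ∏ i, ((if j = i then (σ i : ℝ) * q i else 1) * (if k = i then (σ i : ℝ) * q i else 1)) := by
    intro σ
    rw [Finset.prod_mul_distrib, Finset.prod_ite_eq, Finset.prod_ite_eq]
    simp
  simp only [step]
  rw [prod_sum n (fun i x => (if j = i then (x : ℝ) * q i else 1) * (if k = i then (x : ℝ) * q i else 1))]
  by_cases hjk : j = k
  · subst hjk
    rw [if_pos rfl]
    have : ∀ i : Fin n,
        (∑ x : S, ((if j = i then (x : ℝ) * q i else 1) * (if j = i then (x : ℝ) * q i else 1)))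
        = 2 * (if j = i then q i ^ 2 else 1) := by
      intro i
      by_cases h : j = i
      · rw [sum_S]; simp [h]; ring
      · rw [sum_S]; simp [h]; norm_num
    rw [Finset.prod_congr rfl fun i _ => this i, Finset.prod_mul_distrib,
      Finset.prod_const, Finset.card_univ, Fintype.card_fin, Finset.prod_ite_eq]
    simp
  · rw [if_neg hjk]
    apply Finset.prod_eq_zero (Finset.mem_univ j)
    rw [sum_S]
    have hkj : k ≠ j := fun h => hjk h.symm
    simp [hkj]

lemma key : ∑ σ : Fin n → S,
    ((∏ i, (1 + (σ i : ℝ) * q i)) - ∑ i, (σ i : ℝ) * q i) ^ 2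
    = 2 ^ n * ((∏ i, (1 + q i ^ 2)) - ∑ i, q i ^ 2) := by
  have expand : ∀ σ : Fin n → S,
      ((∏ i, (1 + (σ i : ℝ) * q i)) - ∑ i, (σ i : ℝ) * q i) ^ 2
      = (∏ i, (1 + (σ i : ℝ) * q i) ^ 2)
        - 2 * ∑ j, (∏ i, (1 + (σ i : ℝ) * q i)) * ((σ j : ℝ) * q j)
        + ∑ j, ∑ k, ((σ j : ℝ) * q j) * ((σ k : ℝ) * q k) := by
    intro σ
    rw [Finset.prod_pow, ← Finset.mul_sum, ← Finset.sum_mul_sum]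
    ring
  have h2 : ∑ σ : Fin n → S, ∑ j, (∏ i, (1 + (σ i : ℝ) * q i)) * ((σ j : ℝ) * q j)
      = 2 ^ n * ∑ j, q j ^ 2 := by
    rw [Finset.sum_comm]
    simp only [L2]
    rw [← Finset.mul_sum]
  have h3 : ∑ σ : Fin n → S, ∑ j, ∑ k, ((σ j : ℝ) * q j) * ((σ k : ℝ) * q k)
      = 2 ^ n * ∑ j, q j ^ 2 := by
    rw [Finset.sum_comm]
    have : ∀ j : Fin n, (∑ σ : Fin n → S, ∑ k, ((σ j : ℝ) * q j) * ((σ k : ℝ) * q k))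
        = 2 ^ n * q j ^ 2 := by
      intro j
      rw [Finset.sum_comm]
      simp only [L3]
      rw [Finset.sum_ite_eq]
      simp
    rw [Finset.sum_congr rfl fun j _ => this j, ← Finset.mul_sum]
  simp only [expand]
  rw [Finset.sum_add_distrib, Finset.sum_sub_distrib, L1, ← Finset.mul_sum, h2, h3]
  ring

end Stmt11Aux

open Stmt11Aux in
/-- With `π` uniform on `{−1,1}^n` and `h(σ) = Π_i (1+σ_i q(i))`, one has
`∫(h − Σ_i σ_i q(i))² dπ − 1 = Π_i(1+q(i)²) − Σ_i q(i)² − 1 ≤ e^{⟨q,q⟩} − ⟨q,q⟩ − 1`. -/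
theorem stmt_11 (n : ℕ) (q : Fin n → ℝ) :
    (∫ σ, ((∏ i, (1 + (σ i : ℝ) * q i)) - ∑ i, (σ i : ℝ) * q i) ^ 2
        ∂((PMF.uniformOfFintype (Fin n → ({-1, 1} : Set ℝ))).toMeasure) - 1
      = (∏ i, (1 + q i ^ 2)) - (∑ i, q i ^ 2) - 1)
    ∧ (∏ i, (1 + q i ^ 2)) - (∑ i, q i ^ 2) - 1
      ≤ Real.exp (∑ i, q i ^ 2) - (∑ i, q i ^ 2) - 1 := by
  constructor
  · have hcard : (Fintype.card (Fin n → ({-1, 1} : Set ℝ))) = 2 ^ n := by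
      rw [Fintype.card_fun, card_S, Fintype.card_fin]
    have hint : Integrable
        (fun σ : Fin n → ({-1, 1} : Set ℝ) =>
          ((∏ i, (1 + (σ i : ℝ) * q i)) - ∑ i, (σ i : ℝ) * q i) ^ 2)
        ((PMF.uniformOfFintype (Fin n → ({-1, 1} : Set ℝ))).toMeasure) :=
      Integrable.of_finite
    rw [integral_fintype hint]
    have hμ : ∀ σ : Fin n → ({-1, 1} : Set ℝ),
        ((PMF.uniformOfFintype (Fin n → ({-1, 1} : Set ℝ))).toMeasure {σ}).toReal
          = ((2 : ℝ) ^ n)⁻¹ := by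
      intro σ
      rw [PMF.toMeasure_apply_singleton _ _ (measurableSet_singleton _),
        PMF.uniformOfFintype_apply, hcard, ENNReal.toReal_inv]
      norm_num
    simp only [measureReal_def, hμ, smul_eq_mul]
    rw [← Finset.mul_sum, key n q]
    have h2 : (2 : ℝ) ^ n ≠ 0 := by positivity
    field_simp
  · have hle : (∏ i, (1 + q i ^ 2)) ≤ Real.exp (∑ i, q i ^ 2) := by
      rw [Real.exp_sum]
      exact Finset.prod_le_prod (fun i _ => by positivity)
        (fun i _ => by linarith [Real.add_one_le_exp (q i ^ 2)])
    linarith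
end
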